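/- Let g_1, …, g_p be centered Gaussian random variables (not necessarily independent) each with variance at most V > 0, and let |g|^↓_1 ≥ … ≥ |g|^↓_p denote the non-increasing rearrangement of (|g_1|, …, |g_p|). Then P( max_{j=1,…,p} |g|^↓_j / √(V log(2p/j)) ≤ 4 ) ≥ 1/2. -/

import Mathlib

open MeasureTheory ProbabilityTheory Matrix

/-- The non-increasing rearrangement of the amplitudes `(|θ 1|, …, |θ p|)`. -/
noncomputable def dsort {p : ℕ} (θ : Fin p → ℝ) : Fin p → ℝ :=
  fun j => |θ (Tuple.sort (fun i => |θ i|) j.rev)|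

/-- The ordered ℓ1 (Slope) norm `‖θ‖_Λ = ∑ j, λ_j |θ|^↓_j`. -/
noncomputable def slopeNorm {p : ℕ} (lam θ : Fin p → ℝ) : ℝ :=
  ∑ j, lam j * dsort θ j

/-- The dual norm of the Slope norm: `‖v‖* = sup_{‖θ‖_Λ ≤ 1} ⟨v, θ⟩`. -/
noncomputable def dualSlopeNorm {p : ℕ} (lam v : Fin p → ℝ) : ℝ :=
  sSup {x : ℝ | ∃ θ : Fin p → ℝ, slopeNorm lam θ ≤ 1 ∧ x = ∑ j, v j * θ j}

/-- Euclidean norm of a vector. -/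
noncomputable def enorm2 {n : ℕ} (v : Fin n → ℝ) : ℝ :=
  Real.sqrt (∑ i, (v i) ^ 2)

/-- Number of nonzero entries. -/
noncomputable def l0 {p : ℕ} (u : Fin p → ℝ) : ℕ := Set.ncard {j | u j ≠ 0}

/-- `Λ(λ, s) = (∑_{j=1}^s λ_j²)^{1/2}` (with 0-based indexing: `j < s`). -/
noncomputable def LamS {p : ℕ} (lam : Fin p → ℝ) (s : ℕ) : ℝ :=
  Real.sqrt (∑ j ∈ Finset.univ.filter (fun j : Fin p => (j : ℕ) < s), (lam j) ^ 2)

/-- `∑_{j=1}^s λ_j |u|^↓_j` (0-based: indices `j < s`). -/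
noncomputable def headSum {p : ℕ} (lam : Fin p → ℝ) (s : ℕ) (u : Fin p → ℝ) : ℝ :=
  ∑ j ∈ Finset.univ.filter (fun j : Fin p => (j : ℕ) < s), lam j * dsort u j

/-- `∑_{j=s+1}^p λ_j |u|^↓_j` (0-based: indices `s ≤ j`). -/
noncomputable def tailSum {p : ℕ} (lam : Fin p → ℝ) (s : ℕ) (u : Fin p → ℝ) : ℝ :=
  ∑ j ∈ Finset.univ.filter (fun j : Fin p => s ≤ (j : ℕ)), lam j * dsort u j

/-- An undirected graph on the vertex set `[n]` with `p` (distinct) edges,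
each edge recorded as an ordered pair `(min, max)`. -/
structure GraphOn (n p : ℕ) where
  edge : Fin p → Fin n × Fin n
  lt : ∀ e, (edge e).1 < (edge e).2
  inj : Function.Injective edge

/-- The edge-vertex incidence matrix `Dᵀ ∈ ℝ^{p × n}`:
`(Dᵀ)_{e,v} = +1` if `v = min(i,j)`, `-1` if `v = max(i,j)`, `0` otherwise. -/
def GraphOn.incT {n p : ℕ} (G : GraphOn n p) : Matrix (Fin p) (Fin n) ℝ :=
  Matrix.of fun e v =>
    if v = (G.edge e).1 then 1 else if v = (G.edge e).2 then -1 else 0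

/-- The simple graph associated to a `GraphOn`. -/
def GraphOn.toSimpleGraph {n p : ℕ} (G : GraphOn n p) : SimpleGraph (Fin n) :=
  SimpleGraph.fromRel fun i j => ∃ e, G.edge e = (i, j)

/-- The compatibility factor `κ(s)`. -/
noncomputable def kappa {n p : ℕ} (G : GraphOn n p) (lam : Fin p → ℝ) (s : ℕ) : ℝ :=
  sInf ((fun v : Fin n → ℝ => enorm2 v / enorm2 (G.incT.mulVec v)) ''
    {v : Fin n → ℝ |
      3 * LamS lam s * enorm2 (G.incT.mulVec v) > tailSum lam s (G.incT.mulVec v)})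

/-- The four Penrose conditions: `B` is the Moore–Penrose pseudo-inverse of `A`. -/
def IsMoorePenrose {m k : ℕ} (A : Matrix (Fin m) (Fin k) ℝ)
    (B : Matrix (Fin k) (Fin m) ℝ) : Prop :=
  A * B * A = A ∧ B * A * B = B ∧ (A * B)ᵀ = A * B ∧ (B * A)ᵀ = B * A

/-- `ρ(G) = max_j ‖(Dᵀ)† e_j‖₂`, where `B = (Dᵀ)†`. -/
noncomputable def rhoG {n p : ℕ} (B : Matrix (Fin n) (Fin p) ℝ) : ℝ :=
  ⨆ j : Fin p, enorm2 (fun i => B i j)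

/-- `P` is the matrix of the orthogonal (Euclidean) projection onto `ker Dᵀ`:
symmetric, idempotent, range contained in the kernel, fixing the kernel. -/
def IsOrthProjKer {n p : ℕ} (G : GraphOn n p) (P : Matrix (Fin n) (Fin n) ℝ) : Prop :=
  Pᵀ = P ∧ P * P = P ∧ (∀ v : Fin n → ℝ, G.incT.mulVec (P.mulVec v) = 0) ∧
    ∀ v : Fin n → ℝ, G.incT.mulVec v = 0 → P.mulVec v = v

/-- The Graph-Slope objective `β ↦ (1/(2n))‖y - β‖² + ‖Dᵀβ‖_Λ`. -/
noncomputable def gslopeObj {n p : ℕ} (G : GraphOn n p) (lam : Fin p → ℝ)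
    (y β : Fin n → ℝ) : ℝ :=
  (1 / (2 * (n : ℝ))) * (enorm2 (y - β)) ^ 2 + slopeNorm lam (G.incT.mulVec β)

namespace Stmt12Aux

open Real

lemma dsort_anti {p : ℕ} (θ : Fin p → ℝ) {k j : Fin p} (h : k ≤ j) :
    dsort θ j ≤ dsort θ k :=
  Tuple.monotone_sort (fun i => |θ i|) (Fin.rev_le_rev.mpr h)

lemma dsort_nonneg {p : ℕ} (θ : Fin p → ℝ) (j : Fin p) : 0 ≤ dsort θ j := abs_nonneg _

lemma sum_comp_dsort {p : ℕ} (θ : Fin p → ℝ) (F : ℝ → ℝ) :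
    ∑ j, F ((dsort θ j)^2) = ∑ i, F ((θ i)^2) := by
  calc ∑ j, F ((dsort θ j)^2)
      = ∑ j, F ((θ ((Fin.revPerm.trans (Tuple.sort fun i => |θ i|)) j))^2) := by
        refine Finset.sum_congr rfl fun j _ => ?_
        simp [dsort, sq_abs]
    _ = ∑ i, F ((θ i)^2) :=
        Equiv.sum_comp (Fin.revPerm.trans (Tuple.sort fun i => |θ i|)) (fun i => F ((θ i)^2))

lemma gauss_exp_bound {V : ℝ} (hV : 0 < V) (v : NNReal) (hv : (v:ℝ) ≤ V) :
    ∫⁻ x, ENNReal.ofReal (Real.exp (x^2/(4*V))) ∂(gaussianReal 0 v)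
      ≤ ENNReal.ofReal (Real.sqrt 2) := by
  have h1s : (1:ℝ) ≤ Real.sqrt 2 := by
    nlinarith [Real.sq_sqrt (by norm_num : (0:ℝ) ≤ 2), Real.sqrt_nonneg 2]
  rcases eq_or_ne v 0 with h0 | h0
  · rw [h0, gaussianReal_zero_var, lintegral_dirac]
    simpa using ENNReal.one_le_ofReal.mpr h1s
  · have hv0 : (0:ℝ) < (v : ℝ) := by positivity
    set b : ℝ := 1/(2*(v:ℝ)) - 1/(4*V) with hb_def
    have hb : 0 < b := by
      have h1 : (0:ℝ) < 2*(v:ℝ) := by linarith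
      have h2 : 2*(v:ℝ) < 4*V := by linarith
      have := one_div_lt_one_div_of_lt h1 h2
      simp only [hb_def]; linarith
    have hFm : Measurable fun x : ℝ => ENNReal.ofReal (Real.exp (x^2/(4*V))) := by
      measurability
    rw [gaussianReal_of_var_ne_zero _ h0,
      lintegral_withDensity_eq_lintegral_mul _ (measurable_gaussianPDF _ _) hFm]
    have hpt : ∀ x : ℝ, (gaussianPDF 0 v * fun x => ENNReal.ofReal (Real.exp (x^2/(4*V)))) x
        = ENNReal.ofReal ((Real.sqrt (2*Real.pi*(v:ℝ)))⁻¹ * Real.exp (-b * x^2)) := by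
      intro x
      simp only [Pi.mul_apply, gaussianPDF, ← ENNReal.ofReal_mul (gaussianPDFReal_nonneg 0 v x)]
      congr 1
      unfold gaussianPDFReal
      rw [mul_assoc, ← Real.exp_add]
      congr 1
      simp only [sub_zero, hb_def]
      field_simp
      ring
    rw [lintegral_congr hpt, ← ofReal_integral_eq_lintegral_ofReal
      ((integrable_exp_neg_mul_sq hb).const_mul _)
      (Filter.Eventually.of_forall fun x => by positivity)]
    apply ENNReal.ofReal_le_ofReal
    rw [MeasureTheory.integral_const_mul, integral_gaussian]
    have hA : 0 < Real.sqrt (2*Real.pi*(v:ℝ)) := Real.sqrt_pos.mpr (by positivity)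
    rw [inv_mul_le_iff₀ hA, mul_comm _ (Real.sqrt 2), ← Real.sqrt_mul (by norm_num : (0:ℝ) ≤ 2)]
    apply Real.sqrt_le_sqrt
    rw [div_le_iff₀ hb]
    have hbb : 2*(2*Real.pi*(v:ℝ))*b = Real.pi * (2 - (v:ℝ)/V) := by
      simp only [hb_def]; field_simp; ring
    have hvV : (v:ℝ)/V ≤ 1 := by rw [div_le_one hV]; exact hv
    have hπ : 0 ≤ Real.pi * (1 - (v:ℝ)/V) := mul_nonneg Real.pi_pos.le (by linarith)
    rw [hbb]
    nlinarith [hπ]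

lemma key {p : ℕ} (hp : 0 < p) {V : ℝ} (hV : 0 < V) (θ : Fin p → ℝ)
    (hS : ∑ i, Real.exp ((θ i)^2 / (4*V)) < 2 * Real.sqrt 2 * p) (j : Fin p) :
    dsort θ j / Real.sqrt (V * Real.log (2 * (p:ℝ) / ((j:ℕ) + 1))) ≤ 4 := by
  have hd0 : 0 ≤ dsort θ j := dsort_nonneg θ j
  have hj1 : (0:ℝ) < (j:ℕ) + 1 := by positivity
  have hjp : ((j:ℕ):ℝ) + 1 ≤ p := by exact_mod_cast Nat.succ_le_of_lt j.isLt
  have hp0 : (0:ℝ) < p := by exact_mod_cast hp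
  have h2 : (2:ℝ) ≤ 2 * (p:ℝ) / ((j:ℕ) + 1) := by
    rw [le_div_iff₀ hj1]; nlinarith
  set L : ℝ := Real.log (2 * (p:ℝ) / ((j:ℕ) + 1)) with hL_def
  have hLpos : 0 < L := Real.log_pos (by linarith)
  have hlog2L : Real.log 2 ≤ L := Real.log_le_log (by norm_num) h2
  have hs2 : (0:ℝ) < Real.sqrt 2 := Real.sqrt_pos.mpr (by norm_num)
  -- lower bound on the sum
  have hsum : (((j:ℕ):ℝ) + 1) * Real.exp ((dsort θ j)^2/(4*V))
      ≤ ∑ k, Real.exp ((dsort θ k)^2/(4*V)) := by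
    have hcard : (Finset.Iic j).card = (j:ℕ) + 1 := by simp
    have h1 : (Finset.Iic j).card • Real.exp ((dsort θ j)^2/(4*V))
        ≤ ∑ k ∈ Finset.Iic j, Real.exp ((dsort θ k)^2/(4*V)) := by
      refine Finset.card_nsmul_le_sum _ _ _ fun k hk => ?_
      have hk' : dsort θ j ≤ dsort θ k := dsort_anti θ (Finset.mem_Iic.mp hk)
      have : (dsort θ j)^2 ≤ (dsort θ k)^2 := by nlinarith
      apply Real.exp_le_exp.mpr
      apply div_le_div_of_nonneg_right this ?_ |>.trans_eq rfl
      · positivity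
    rw [hcard, nsmul_eq_mul] at h1
    push_cast at h1 ⊢
    refine le_trans h1 (Finset.sum_le_sum_of_subset_of_nonneg (Finset.subset_univ _)
      fun _ _ _ => (Real.exp_pos _).le)
  have hsum' : ∑ k, Real.exp ((dsort θ k)^2/(4*V)) = ∑ i, Real.exp ((θ i)^2/(4*V)) :=
    sum_comp_dsort θ (fun t => Real.exp (t/(4*V)))
  have hexp : Real.exp ((dsort θ j)^2/(4*V)) < (2 * Real.sqrt 2 * p) / (((j:ℕ):ℝ) + 1) := by
    rw [lt_div_iff₀ hj1]
    have := hsum.trans_eq hsum'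
    nlinarith [Real.exp_pos ((dsort θ j)^2/(4*V))]
  have hcpos : (0:ℝ) < (2 * Real.sqrt 2 * p) / (((j:ℕ):ℝ) + 1) := by positivity
  have hlog : (dsort θ j)^2/(4*V) < Real.log ((2 * Real.sqrt 2 * p) / (((j:ℕ):ℝ) + 1)) :=
    (Real.lt_log_iff_exp_lt hcpos).mpr hexp
  have hlogle : Real.log ((2 * Real.sqrt 2 * p) / (((j:ℕ):ℝ) + 1)) ≤ (3/2) * L := by
    have heq : (2 * Real.sqrt 2 * p) / (((j:ℕ):ℝ) + 1)
        = Real.sqrt 2 * (2 * (p:ℝ) / ((j:ℕ) + 1)) := by field_simp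
    rw [heq, Real.log_mul (ne_of_gt hs2) (by positivity),
      Real.log_sqrt (by norm_num : (0:ℝ) ≤ 2)]
    simp only [← hL_def]
    linarith
  have hd2 : (dsort θ j)^2 ≤ 16 * (V * L) := by
    have h4V : (0:ℝ) < 4*V := by linarith
    have hd2' := (div_lt_iff₀ h4V).mp hlog
    nlinarith [mul_pos hV hLpos]
  have hfin : dsort θ j ≤ 4 * Real.sqrt (V * L) := by
    calc dsort θ j = Real.sqrt ((dsort θ j)^2) := (Real.sqrt_sq hd0).symm
      _ ≤ Real.sqrt (16 * (V * L)) := Real.sqrt_le_sqrt hd2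
      _ = 4 * Real.sqrt (V * L) := by
          rw [show (16:ℝ) = 4^2 by norm_num, Real.sqrt_mul (by positivity),
            Real.sqrt_sq (by norm_num)]
  rw [div_le_iff₀ (Real.sqrt_pos.mpr (mul_pos hV hLpos))]
  linarith

end Stmt12Aux

theorem statement_12' {p : ℕ} (hp : 0 < p)
    {Ω : Type} [MeasurableSpace Ω] (μ : Measure Ω) [IsProbabilityMeasure μ]
    (V : ℝ) (hV : 0 < V) (g : Fin p → Ω → ℝ)
    (hg : ∀ j, ∃ v : NNReal, (v : ℝ) ≤ V ∧ Measure.map (g j) μ = gaussianReal 0 v) :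
    1 / 2 ≤
      μ {ω | ∀ j : Fin p,
        dsort (fun j' => g j' ω) j /
            Real.sqrt (V * Real.log (2 * (p : ℝ) / ((j : ℕ) + 1))) ≤ 4} := by
  classical
  have hp0 : (0:ℝ) < p := by exact_mod_cast hp
  have hs2 : (0:ℝ) < Real.sqrt 2 := Real.sqrt_pos.mpr (by norm_num)
  set c : ℝ := 2 * Real.sqrt 2 * p with hc_def
  have hc_pos : 0 < c := by positivity
  -- measurability of the g j
  have hmeas : ∀ j, AEMeasurable (g j) μ := by
    intro j
    obtain ⟨v, -, hmap⟩ := hg j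
    by_contra h
    rw [Measure.map_of_not_aemeasurable h] at hmap
    have h1 : (gaussianReal 0 v) Set.univ = 1 := measure_univ
    rw [← hmap] at h1
    simp at h1
  have hFm : Measurable fun x : ℝ => ENNReal.ofReal (Real.exp (x^2/(4*V))) := by
    measurability
  set Z : Ω → ENNReal := fun ω => ∑ i, ENNReal.ofReal (Real.exp ((g i ω)^2/(4*V))) with hZ_def
  have hZmeas : AEMeasurable Z μ :=
    Finset.aemeasurable_fun_sum _ fun i _ => hFm.comp_aemeasurable (hmeas i)
  have hint : ∫⁻ ω, Z ω ∂μ ≤ ENNReal.ofReal (Real.sqrt 2 * p) := by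
    rw [hZ_def, lintegral_finset_sum'
      (f := fun (i : Fin p) (ω : Ω) => ENNReal.ofReal (Real.exp ((g i ω)^2/(4*V))))
      Finset.univ (fun i _ => hFm.comp_aemeasurable (hmeas i))]
    calc ∑ i : Fin p, ∫⁻ ω, ENNReal.ofReal (Real.exp ((g i ω)^2/(4*V))) ∂μ
        ≤ ∑ _i : Fin p, ENNReal.ofReal (Real.sqrt 2) := by
          refine Finset.sum_le_sum fun i _ => ?_
          obtain ⟨v, hvV, hmap⟩ := hg i
          rw [← lintegral_map' hFm.aemeasurable (hmeas i), hmap]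
          exact Stmt12Aux.gauss_exp_bound hV v hvV
      _ = (p : ENNReal) * ENNReal.ofReal (Real.sqrt 2) := by
          rw [Finset.sum_const, Finset.card_univ, Fintype.card_fin, nsmul_eq_mul]
      _ = ENNReal.ofReal (Real.sqrt 2 * p) := by
          rw [ENNReal.ofReal_mul hs2.le, ENNReal.ofReal_natCast, mul_comm]
  set A : Set Ω := {ω | ENNReal.ofReal c ≤ Z ω} with hA_def
  have hmarkov : μ A ≤ 1/2 := by
    have h1 := (mul_meas_ge_le_lintegral₀ hZmeas (ENNReal.ofReal c)).trans hint
    have hc_ne0 : ENNReal.ofReal c ≠ 0 := by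
      simp only [ne_eq, ENNReal.ofReal_eq_zero, not_le]; exact hc_pos
    rw [mul_comm] at h1
    have h2 : μ A ≤ ENNReal.ofReal (Real.sqrt 2 * p) / ENNReal.ofReal c :=
      (ENNReal.le_div_iff_mul_le (Or.inl hc_ne0) (Or.inl ENNReal.ofReal_ne_top)).mpr h1
    have h3 : ENNReal.ofReal (Real.sqrt 2 * p) / ENNReal.ofReal c
        = ENNReal.ofReal (1/2) := by
      rw [← ENNReal.ofReal_div_of_pos hc_pos]
      congr 1
      rw [hc_def]
      field_simp
    rw [h3] at h2
    refine h2.trans_eq ?_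
    rw [ENNReal.ofReal_div_of_pos (by norm_num), ENNReal.ofReal_one, ENNReal.ofReal_ofNat]
  have hsub : Aᶜ ⊆ {ω | ∀ j : Fin p,
      dsort (fun j' => g j' ω) j /
        Real.sqrt (V * Real.log (2 * (p : ℝ) / ((j : ℕ) + 1))) ≤ 4} := by
    intro ω hω
    have hZω : Z ω < ENNReal.ofReal c := lt_of_not_ge hω
    have hofS : Z ω = ENNReal.ofReal (∑ i, Real.exp ((g i ω)^2/(4*V))) :=
      (ENNReal.ofReal_sum_of_nonneg fun i _ => (Real.exp_pos _).le).symm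
    rw [hofS] at hZω
    have hS : ∑ i, Real.exp ((g i ω)^2/(4*V)) < c :=
      (ENNReal.ofReal_lt_ofReal_iff_of_nonneg
        (Finset.sum_nonneg fun i _ => (Real.exp_pos _).le)).mp hZω
    exact fun j => Stmt12Aux.key hp hV _ hS j
  have hAnm : NullMeasurableSet A μ :=
    hZmeas.nullMeasurableSet_preimage measurableSet_Ici
  calc (1:ENNReal)/2 = 1 - 1/2 := (ENNReal.sub_half ENNReal.one_ne_top).symm
    _ ≤ 1 - μ A := tsub_le_tsub_left hmarkov 1
    _ = μ Aᶜ := by rw [measure_compl₀ hAnm (measure_ne_top μ A), measure_univ]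
    _ ≤ _ := measure_mono hsub

/-- concentration of the non-increasing rearrangement of Gaussian
amplitudes (Proposition E.2 of Bellec–Lecué–Tsybakov). -/
theorem statement_12 {p : ℕ} (hp : 0 < p)
    {Ω : Type} [MeasurableSpace Ω] (μ : Measure Ω) [IsProbabilityMeasure μ]
    (V : ℝ) (hV : 0 < V) (g : Fin p → Ω → ℝ)
    (hg : ∀ j, ∃ v : NNReal, (v : ℝ) ≤ V ∧ Measure.map (g j) μ = gaussianReal 0 v) :
    1 / 2 ≤
      μ {ω | ∀ j : Fin p,
        dsort (fun j' => g j' ω) j /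
            Real.sqrt (V * Real.log (2 * (p : ℝ) / ((j : ℕ) + 1))) ≤ 4} := by
  exact statement_12' hp μ V hV g hg
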